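/- arXiv:2112.08465 — 2 statements merged into one kernel-verified Lean document; each statement's English description precedes it below -/
import Mathlib

section
/- Let (V,⟨·,·⟩) be a real inner product space of dimension n ≥ 4 and let R be an algebraic curvature tensor on V having 3-nonnegative curvature operator of the second kind. Then for every orthonormal four-frame {e_1,e_2,e_3,e_4} in V and every real number λ, one has R_{1313} + λ²R_{1414} + R_{2323} + λ²R_{2424} - 4λR_{1234} ≥ 0. -/
open scoped RealInnerProductSpace

variable {V : Type*} [NormedAddCommGroup V] [InnerProductSpace ℝ V]

/-- `R` is an algebraic curvature tensor: antisymmetric in the first two slots,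
symmetric under exchange of the first and second pairs, and satisfying the
first Bianchi identity. -/
def IsAlgCurvatureTensor (R : V →ₗ[ℝ] V →ₗ[ℝ] V →ₗ[ℝ] V →ₗ[ℝ] ℝ) : Prop :=
  (∀ x y z w : V, R x y z w = - R y x z w) ∧
  (∀ x y z w : V, R x y z w = R z w x y) ∧
  (∀ x y z w : V, R x y z w + R y z x w + R z x y w = 0)

/-- The Ricci curvature `Ric(x,y) = Σ_j R(x,e_j,y,e_j)` with respect to an
orthonormal basis. -/
noncomputable def ricci {n : ℕ} (b : OrthonormalBasis (Fin n) ℝ V)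
    (R : V →ₗ[ℝ] V →ₗ[ℝ] V →ₗ[ℝ] V →ₗ[ℝ] ℝ) (x y : V) : ℝ :=
  ∑ j, R x (b j) y (b j)

/-- The scalar curvature `S = Σ_{i,j} R_{ijij}`. -/
noncomputable def scalarCurv {n : ℕ} (b : OrthonormalBasis (Fin n) ℝ V)
    (R : V →ₗ[ℝ] V →ₗ[ℝ] V →ₗ[ℝ] V →ₗ[ℝ] ℝ) : ℝ :=
  ∑ i, ∑ j, R (b i) (b j) (b i) (b j)

/-- `φ` is a symmetric bilinear form which is traceless with respect to the
orthonormal basis `b`. -/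
def IsTracelessSymForm {n : ℕ} (b : OrthonormalBasis (Fin n) ℝ V)
    (φ : V →ₗ[ℝ] V →ₗ[ℝ] ℝ) : Prop :=
  (∀ x y : V, φ x y = φ y x) ∧ (∑ i, φ (b i) (b i) = 0)

/-- The inner product `⟨φ,ψ⟩ = Σ_{i,j} φ(e_i,e_j) ψ(e_i,e_j)` of bilinear forms. -/
noncomputable def formInner {n : ℕ} (b : OrthonormalBasis (Fin n) ℝ V)
    (φ ψ : V →ₗ[ℝ] V →ₗ[ℝ] ℝ) : ℝ :=
  ∑ i, ∑ j, φ (b i) (b j) * ψ (b i) (b j)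

/-- The curvature operator of the second kind
`R̊(φ,ψ) = Σ_{i,j,k,l} R_{ijkl} φ(e_i,e_l) ψ(e_j,e_k)`. -/
noncomputable def secondKind {n : ℕ} (b : OrthonormalBasis (Fin n) ℝ V)
    (R : V →ₗ[ℝ] V →ₗ[ℝ] V →ₗ[ℝ] V →ₗ[ℝ] ℝ)
    (φ ψ : V →ₗ[ℝ] V →ₗ[ℝ] ℝ) : ℝ :=
  ∑ i, ∑ j, ∑ k, ∑ l,
    R (b i) (b j) (b k) (b l) * φ (b i) (b l) * ψ (b j) (b k)

/-- `R` has `k`-nonnegative curvature operator of the second kind: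
`Σ_{a=1}^k R̊(φ_a,φ_a) ≥ 0` for every orthonormal `k`-tuple of traceless
symmetric bilinear forms. -/
def kNonnegSecondKind {n : ℕ} (b : OrthonormalBasis (Fin n) ℝ V)
    (R : V →ₗ[ℝ] V →ₗ[ℝ] V →ₗ[ℝ] V →ₗ[ℝ] ℝ) (k : ℕ) : Prop :=
  ∀ φ : Fin k → (V →ₗ[ℝ] V →ₗ[ℝ] ℝ),
    (∀ a, IsTracelessSymForm b (φ a)) →
    (∀ a a', formInner b (φ a) (φ a') = if a = a' then 1 else 0) →
    0 ≤ ∑ a, secondKind b R (φ a) (φ a)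

/-- `R` has `k`-positive curvature operator of the second kind:
`Σ_{a=1}^k R̊(φ_a,φ_a) > 0` for every orthonormal `k`-tuple of traceless
symmetric bilinear forms. -/
def kPosSecondKind {n : ℕ} (b : OrthonormalBasis (Fin n) ℝ V)
    (R : V →ₗ[ℝ] V →ₗ[ℝ] V →ₗ[ℝ] V →ₗ[ℝ] ℝ) (k : ℕ) : Prop :=
  ∀ φ : Fin k → (V →ₗ[ℝ] V →ₗ[ℝ] ℝ),
    (∀ a, IsTracelessSymForm b (φ a)) →
    (∀ a a', formInner b (φ a) (φ a') = if a = a' then 1 else 0) →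
    0 < ∑ a, secondKind b R (φ a) (φ a)


noncomputable def bf (u v : V) : V →ₗ[ℝ] V →ₗ[ℝ] ℝ :=
  LinearMap.mk₂ ℝ (fun x y => ⟪u, x⟫ * ⟪v, y⟫)
    (fun x x' y => by simp [inner_add_right]; ring)
    (fun c x y => by simp [inner_smul_right]; ring)
    (fun x y y' => by simp [inner_add_right]; ring)
    (fun x c y => by simp [inner_smul_right]; ring)

@[simp] lemma bf_apply (u v x y : V) : bf u v x y = ⟪u, x⟫ * ⟪v, y⟫ := rfl

section AuxLemmas
variable {n : ℕ} (b : OrthonormalBasis (Fin n) ℝ V)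

lemma pars (u w : V) : ∑ i, ⟪u, b i⟫ * ⟪w, b i⟫ = ⟪u, w⟫ := by
  rw [← b.sum_inner_mul_inner u w]
  exact Finset.sum_congr rfl fun i _ => by rw [real_inner_comm w (b i)]

lemma expand_smul {M : Type*} [AddCommMonoid M] [Module ℝ M] (F : V →ₗ[ℝ] M) (u : V) :
    F u = ∑ i, ⟪u, b i⟫ • F (b i) := by
  conv_lhs => rw [← b.sum_repr u]
  rw [map_sum]
  exact Finset.sum_congr rfl fun i _ => by
    rw [map_smul, b.repr_apply_apply, real_inner_comm]

variable (R : V →ₗ[ℝ] V →ₗ[ℝ] V →ₗ[ℝ] V →ₗ[ℝ] ℝ)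

lemma secondKind_bf (u v u' v' : V) :
    secondKind b R (bf u v) (bf u' v') = R u u' v' v := by
  have h1 : R u u' v' v = ∑ i, ⟪u, b i⟫ * R (b i) u' v' v := by
    rw [expand_smul b R u]; simp
  have h2 : ∀ x, R x u' v' v = ∑ j, ⟪u', b j⟫ * R x (b j) v' v := fun x => by
    rw [expand_smul b (R x) u']; simp
  have h3 : ∀ x y, R x y v' v = ∑ k, ⟪v', b k⟫ * R x y (b k) v := fun x y => by
    rw [expand_smul b (R x y) v']; simp
  have h4 : ∀ x y z, R x y z v = ∑ l, ⟪v, b l⟫ * R x y z (b l) := fun x y z => by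
    rw [expand_smul b (R x y z) v]; simp
  rw [h1]
  simp only [h2, h3, h4, Finset.mul_sum]
  unfold secondKind
  refine Finset.sum_congr rfl fun i _ => Finset.sum_congr rfl fun j _ =>
    Finset.sum_congr rfl fun k _ => Finset.sum_congr rfl fun l _ => by simp; ring

lemma formInner_bf (u v u' v' : V) :
    formInner b (bf u v) (bf u' v') = ⟪u, u'⟫ * ⟪v, v'⟫ := by
  unfold formInner
  rw [← pars b u u', ← pars b v v', Finset.sum_mul_sum]
  exact Finset.sum_congr rfl fun i _ => Finset.sum_congr rfl fun j _ => by simp; ring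

lemma formInner_comm (φ ψ : V →ₗ[ℝ] V →ₗ[ℝ] ℝ) :
    formInner b φ ψ = formInner b ψ φ :=
  Finset.sum_congr rfl fun i _ => Finset.sum_congr rfl fun j _ => mul_comm _ _

lemma formInner_add_left (φ φ' ψ : V →ₗ[ℝ] V →ₗ[ℝ] ℝ) :
    formInner b (φ + φ') ψ = formInner b φ ψ + formInner b φ' ψ := by
  unfold formInner
  simp only [LinearMap.add_apply, add_mul, Finset.sum_add_distrib]

lemma formInner_smul_left (c : ℝ) (φ ψ : V →ₗ[ℝ] V →ₗ[ℝ] ℝ) :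
    formInner b (c • φ) ψ = c * formInner b φ ψ := by
  unfold formInner
  simp only [LinearMap.smul_apply, smul_eq_mul, Finset.mul_sum]
  exact Finset.sum_congr rfl fun _ _ => Finset.sum_congr rfl fun _ _ => by ring

lemma formInner_add_right (φ ψ ψ' : V →ₗ[ℝ] V →ₗ[ℝ] ℝ) :
    formInner b φ (ψ + ψ') = formInner b φ ψ + formInner b φ ψ' := by
  rw [formInner_comm, formInner_add_left, formInner_comm b ψ φ, formInner_comm b ψ' φ]

lemma formInner_smul_right (c : ℝ) (φ ψ : V →ₗ[ℝ] V →ₗ[ℝ] ℝ) :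
    formInner b φ (c • ψ) = c * formInner b φ ψ := by
  rw [formInner_comm, formInner_smul_left, formInner_comm b ψ φ]

lemma secondKind_add_left (φ φ' ψ : V →ₗ[ℝ] V →ₗ[ℝ] ℝ) :
    secondKind b R (φ + φ') ψ = secondKind b R φ ψ + secondKind b R φ' ψ := by
  unfold secondKind
  simp only [LinearMap.add_apply, add_mul, mul_add, Finset.sum_add_distrib]

lemma secondKind_add_right (φ ψ ψ' : V →ₗ[ℝ] V →ₗ[ℝ] ℝ) :
    secondKind b R φ (ψ + ψ') = secondKind b R φ ψ + secondKind b R φ ψ' := by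
  unfold secondKind
  simp only [LinearMap.add_apply, add_mul, mul_add, Finset.sum_add_distrib]

lemma secondKind_smul_left (c : ℝ) (φ ψ : V →ₗ[ℝ] V →ₗ[ℝ] ℝ) :
    secondKind b R (c • φ) ψ = c * secondKind b R φ ψ := by
  unfold secondKind
  simp only [LinearMap.smul_apply, smul_eq_mul, Finset.mul_sum]
  refine Finset.sum_congr rfl fun _ _ => Finset.sum_congr rfl fun _ _ =>
    Finset.sum_congr rfl fun _ _ => Finset.sum_congr rfl fun _ _ => by ring

lemma secondKind_smul_right (c : ℝ) (φ ψ : V →ₗ[ℝ] V →ₗ[ℝ] ℝ) :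
    secondKind b R φ (c • ψ) = c * secondKind b R φ ψ := by
  unfold secondKind
  simp only [LinearMap.smul_apply, smul_eq_mul, Finset.mul_sum]
  refine Finset.sum_congr rfl fun _ _ => Finset.sum_congr rfl fun _ _ =>
    Finset.sum_congr rfl fun _ _ => Finset.sum_congr rfl fun _ _ => by ring

lemma trace_add (φ ψ : V →ₗ[ℝ] V →ₗ[ℝ] ℝ) :
    ∑ i, (φ + ψ) (b i) (b i) = (∑ i, φ (b i) (b i)) + ∑ i, ψ (b i) (b i) := by
  simp only [LinearMap.add_apply, Finset.sum_add_distrib]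

lemma trace_smul (c : ℝ) (φ : V →ₗ[ℝ] V →ₗ[ℝ] ℝ) :
    ∑ i, (c • φ) (b i) (b i) = c * ∑ i, φ (b i) (b i) := by
  simp only [LinearMap.smul_apply, smul_eq_mul, Finset.mul_sum]

lemma trace_bf (u v : V) : ∑ i, bf u v (b i) (b i) = ⟪u, v⟫ := by
  simpa using pars b u v

lemma tracelessSym_smul (c : ℝ) (φ : V →ₗ[ℝ] V →ₗ[ℝ] ℝ)
    (h : IsTracelessSymForm b φ) : IsTracelessSymForm b (c • φ) := by
  constructor
  · intro x y
    simp only [LinearMap.smul_apply, smul_eq_mul]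
    rw [h.1 x y]
  · simp only [LinearMap.smul_apply, smul_eq_mul, ← Finset.mul_sum, h.2, mul_zero]

lemma triple_ineq (h3 : kNonnegSecondKind b R 3)
    (ψ1 ψ2 ψ3 : V →ₗ[ℝ] V →ₗ[ℝ] ℝ)
    (ht1 : IsTracelessSymForm b ψ1) (ht2 : IsTracelessSymForm b ψ2)
    (ht3 : IsTracelessSymForm b ψ3)
    (N1 N2 N3 : ℝ)
    (hN1 : formInner b ψ1 ψ1 = N1) (hN2 : formInner b ψ2 ψ2 = N2)
    (hN3 : formInner b ψ3 ψ3 = N3)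
    (hP1 : 0 < N1) (hP2 : 0 < N2) (hP3 : 0 < N3)
    (h12 : formInner b ψ1 ψ2 = 0) (h13 : formInner b ψ1 ψ3 = 0)
    (h23 : formInner b ψ2 ψ3 = 0) :
    0 ≤ N2 * N3 * secondKind b R ψ1 ψ1 + N1 * N3 * secondKind b R ψ2 ψ2
        + N1 * N2 * secondKind b R ψ3 ψ3 := by
  set s1 : ℝ := (Real.sqrt N1)⁻¹ with hs1
  set s2 : ℝ := (Real.sqrt N2)⁻¹ with hs2
  set s3 : ℝ := (Real.sqrt N3)⁻¹ with hs3
  have hq1 : s1 * s1 * N1 = 1 := by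
    rw [hs1, ← Real.sqrt_mul_self hP1.le]; field_simp; rw [Real.sq_sqrt (Real.sqrt_nonneg _)]
  have hq2 : s2 * s2 * N2 = 1 := by
    rw [hs2, ← Real.sqrt_mul_self hP2.le]; field_simp; rw [Real.sq_sqrt (Real.sqrt_nonneg _)]
  have hq3 : s3 * s3 * N3 = 1 := by
    rw [hs3, ← Real.sqrt_mul_self hP3.le]; field_simp; rw [Real.sq_sqrt (Real.sqrt_nonneg _)]
  set φ : Fin 3 → (V →ₗ[ℝ] V →ₗ[ℝ] ℝ) := ![s1 • ψ1, s2 • ψ2, s3 • ψ3] with hφ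
  have key := h3 φ ?_ ?_
  · rw [Fin.sum_univ_three] at key
    have e1 : φ 0 = s1 • ψ1 := rfl
    have e2 : φ 1 = s2 • ψ2 := rfl
    have e3 : φ 2 = s3 • ψ3 := rfl
    rw [e1, e2, e3] at key
    simp only [secondKind_smul_left, secondKind_smul_right] at key
    have hmul := mul_nonneg (mul_nonneg (mul_nonneg hP1.le hP2.le) hP3.le) key
    calc (0:ℝ) = N1 * N2 * N3 * 0 := by ring
    _ ≤ N1 * N2 * N3 *
        (s1 * (s1 * secondKind b R ψ1 ψ1) + s2 * (s2 * secondKind b R ψ2 ψ2)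
          + s3 * (s3 * secondKind b R ψ3 ψ3)) := by
        rw [mul_zero]; exact hmul
    _ = (s1*s1*N1) * (N2 * N3 * secondKind b R ψ1 ψ1)
        + (s2*s2*N2) * (N1 * N3 * secondKind b R ψ2 ψ2)
        + (s3*s3*N3) * (N1 * N2 * secondKind b R ψ3 ψ3) := by ring
    _ = N2 * N3 * secondKind b R ψ1 ψ1 + N1 * N3 * secondKind b R ψ2 ψ2
        + N1 * N2 * secondKind b R ψ3 ψ3 := by rw [hq1, hq2, hq3]; ring
  · intro a
    fin_cases a
    · exact tracelessSym_smul b s1 ψ1 ht1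
    · exact tracelessSym_smul b s2 ψ2 ht2
    · exact tracelessSym_smul b s3 ψ3 ht3
  · have d1 : formInner b (s1 • ψ1) (s1 • ψ1) = 1 := by
      rw [formInner_smul_left, formInner_smul_right, hN1]; linear_combination hq1
    have d2 : formInner b (s2 • ψ2) (s2 • ψ2) = 1 := by
      rw [formInner_smul_left, formInner_smul_right, hN2]; linear_combination hq2
    have d3 : formInner b (s3 • ψ3) (s3 • ψ3) = 1 := by
      rw [formInner_smul_left, formInner_smul_right, hN3]; linear_combination hq3
    have o12 : formInner b (s1 • ψ1) (s2 • ψ2) = 0 := by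
      rw [formInner_smul_left, formInner_smul_right, h12]; ring
    have o13 : formInner b (s1 • ψ1) (s3 • ψ3) = 0 := by
      rw [formInner_smul_left, formInner_smul_right, h13]; ring
    have o23 : formInner b (s2 • ψ2) (s3 • ψ3) = 0 := by
      rw [formInner_smul_left, formInner_smul_right, h23]; ring
    have o21 : formInner b (s2 • ψ2) (s1 • ψ1) = 0 := by
      rw [formInner_comm]; exact o12
    have o31 : formInner b (s3 • ψ3) (s1 • ψ1) = 0 := by
      rw [formInner_comm]; exact o13
    have o32 : formInner b (s3 • ψ3) (s2 • ψ2) = 0 := by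
      rw [formInner_comm]; exact o23
    intro a a'
    fin_cases a <;> fin_cases a'
    · simpa [hφ] using d1
    · simpa [hφ] using o12
    · simpa [hφ] using o13
    · simpa [hφ] using o21
    · simpa [hφ] using d2
    · simpa [hφ] using o23
    · simpa [hφ] using o31
    · simpa [hφ] using o32
    · simpa [hφ] using d3

end AuxLemmas

section Forms
variable {n : ℕ} (b : OrthonormalBasis (Fin n) ℝ V)
noncomputable def FSp (e : Fin 4 → V) (lam : ℝ) : V →ₗ[ℝ] V →ₗ[ℝ] ℝ :=
  bf (e 0) (e 2) + bf (e 2) (e 0) + lam • (bf (e 1) (e 3) + bf (e 3) (e 1))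
noncomputable def FSm (e : Fin 4 → V) (lam : ℝ) : V →ₗ[ℝ] V →ₗ[ℝ] ℝ :=
  lam • (bf (e 0) (e 3) + bf (e 3) (e 0)) + (-1 : ℝ) • (bf (e 1) (e 2) + bf (e 2) (e 1))
noncomputable def FO12 (e : Fin 4 → V) : V →ₗ[ℝ] V →ₗ[ℝ] ℝ :=
  bf (e 0) (e 1) + bf (e 1) (e 0)
noncomputable def FO34 (e : Fin 4 → V) : V →ₗ[ℝ] V →ₗ[ℝ] ℝ :=
  bf (e 2) (e 3) + bf (e 3) (e 2)
noncomputable def FdA (e : Fin 4 → V) : V →ₗ[ℝ] V →ₗ[ℝ] ℝ :=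
  bf (e 0) (e 0) + bf (e 1) (e 1) + (-1 : ℝ) • (bf (e 2) (e 2) + bf (e 3) (e 3))
noncomputable def FdD (e : Fin 4 → V) : V →ₗ[ℝ] V →ₗ[ℝ] ℝ :=
  bf (e 0) (e 0) + bf (e 1) (e 1) + (-2 : ℝ) • (bf (e 2) (e 2))
noncomputable def FdC (e : Fin 4 → V) : V →ₗ[ℝ] V →ₗ[ℝ] ℝ :=
  bf (e 0) (e 0) + bf (e 1) (e 1) + (-2 : ℝ) • (bf (e 3) (e 3))

variable (e : Fin 4 → V) (lam : ℝ)
variable (hee : ∀ i j : Fin 4, ⟪e i, e j⟫ = if i = j then (1:ℝ) else 0)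

lemma tsSp (hee : ∀ i j : Fin 4, ⟪e i, e j⟫ = if i = j then (1:ℝ) else 0) : IsTracelessSymForm b (FSp e lam) := by
  constructor
  · intro x y
    simp only [FSp, LinearMap.add_apply, LinearMap.smul_apply, bf_apply, smul_eq_mul]
    ring
  · simp only [FSp, trace_add, trace_smul, trace_bf, hee]
    simp only [Fin.reduceEq, if_true, if_false, reduceIte]
    norm_num
lemma tsSm (hee : ∀ i j : Fin 4, ⟪e i, e j⟫ = if i = j then (1:ℝ) else 0) : IsTracelessSymForm b (FSm e lam) := by
  constructor
  · intro x y
    simp only [FSm, LinearMap.add_apply, LinearMap.smul_apply, bf_apply, smul_eq_mul]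
    ring
  · simp only [FSm, trace_add, trace_smul, trace_bf, hee]
    simp only [Fin.reduceEq, if_true, if_false, reduceIte]
    norm_num
lemma tsO12 (hee : ∀ i j : Fin 4, ⟪e i, e j⟫ = if i = j then (1:ℝ) else 0) : IsTracelessSymForm b (FO12 e) := by
  constructor
  · intro x y
    simp only [FO12, LinearMap.add_apply, LinearMap.smul_apply, bf_apply, smul_eq_mul]
    ring
  · simp only [FO12, trace_add, trace_smul, trace_bf, hee]
    simp only [Fin.reduceEq, if_true, if_false, reduceIte]
    norm_num
lemma tsO34 (hee : ∀ i j : Fin 4, ⟪e i, e j⟫ = if i = j then (1:ℝ) else 0) : IsTracelessSymForm b (FO34 e) := by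
  constructor
  · intro x y
    simp only [FO34, LinearMap.add_apply, LinearMap.smul_apply, bf_apply, smul_eq_mul]
    ring
  · simp only [FO34, trace_add, trace_smul, trace_bf, hee]
    simp only [Fin.reduceEq, if_true, if_false, reduceIte]
    norm_num
lemma tsdA (hee : ∀ i j : Fin 4, ⟪e i, e j⟫ = if i = j then (1:ℝ) else 0) : IsTracelessSymForm b (FdA e) := by
  constructor
  · intro x y
    simp only [FdA, LinearMap.add_apply, LinearMap.smul_apply, bf_apply, smul_eq_mul]
    ring
  · simp only [FdA, trace_add, trace_smul, trace_bf, hee]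
    simp only [Fin.reduceEq, if_true, if_false, reduceIte]
    norm_num
lemma tsdD (hee : ∀ i j : Fin 4, ⟪e i, e j⟫ = if i = j then (1:ℝ) else 0) : IsTracelessSymForm b (FdD e) := by
  constructor
  · intro x y
    simp only [FdD, LinearMap.add_apply, LinearMap.smul_apply, bf_apply, smul_eq_mul]
    ring
  · simp only [FdD, trace_add, trace_smul, trace_bf, hee]
    simp only [Fin.reduceEq, if_true, if_false, reduceIte]
    norm_num
lemma tsdC (hee : ∀ i j : Fin 4, ⟪e i, e j⟫ = if i = j then (1:ℝ) else 0) : IsTracelessSymForm b (FdC e) := by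
  constructor
  · intro x y
    simp only [FdC, LinearMap.add_apply, LinearMap.smul_apply, bf_apply, smul_eq_mul]
    ring
  · simp only [FdC, trace_add, trace_smul, trace_bf, hee]
    simp only [Fin.reduceEq, if_true, if_false, reduceIte]
    norm_num
lemma nvSp (hee : ∀ i j : Fin 4, ⟪e i, e j⟫ = if i = j then (1:ℝ) else 0) : formInner b (FSp e lam) (FSp e lam) = 2 + 2*lam^2 := by
  simp only [FSp, formInner_add_left, formInner_add_right, formInner_smul_left, formInner_smul_right, formInner_bf, hee]
  simp only [Fin.reduceEq, if_true, if_false, reduceIte]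
  norm_num
  try ring
lemma nvSm (hee : ∀ i j : Fin 4, ⟪e i, e j⟫ = if i = j then (1:ℝ) else 0) : formInner b (FSm e lam) (FSm e lam) = 2 + 2*lam^2 := by
  simp only [FSm, formInner_add_left, formInner_add_right, formInner_smul_left, formInner_smul_right, formInner_bf, hee]
  simp only [Fin.reduceEq, if_true, if_false, reduceIte]
  norm_num
  try ring
lemma nvO12 (hee : ∀ i j : Fin 4, ⟪e i, e j⟫ = if i = j then (1:ℝ) else 0) : formInner b (FO12 e) (FO12 e) = 2 := by
  simp only [FO12, formInner_add_left, formInner_add_right, formInner_smul_left, formInner_smul_right, formInner_bf, hee]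
  simp only [Fin.reduceEq, if_true, if_false, reduceIte]
  norm_num
  try ring
lemma nvO34 (hee : ∀ i j : Fin 4, ⟪e i, e j⟫ = if i = j then (1:ℝ) else 0) : formInner b (FO34 e) (FO34 e) = 2 := by
  simp only [FO34, formInner_add_left, formInner_add_right, formInner_smul_left, formInner_smul_right, formInner_bf, hee]
  simp only [Fin.reduceEq, if_true, if_false, reduceIte]
  norm_num
  try ring
lemma nvdA (hee : ∀ i j : Fin 4, ⟪e i, e j⟫ = if i = j then (1:ℝ) else 0) : formInner b (FdA e) (FdA e) = 4 := by
  simp only [FdA, formInner_add_left, formInner_add_right, formInner_smul_left, formInner_smul_right, formInner_bf, hee]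
  simp only [Fin.reduceEq, if_true, if_false, reduceIte]
  norm_num
  try ring
lemma nvdD (hee : ∀ i j : Fin 4, ⟪e i, e j⟫ = if i = j then (1:ℝ) else 0) : formInner b (FdD e) (FdD e) = 6 := by
  simp only [FdD, formInner_add_left, formInner_add_right, formInner_smul_left, formInner_smul_right, formInner_bf, hee]
  simp only [Fin.reduceEq, if_true, if_false, reduceIte]
  norm_num
  try ring
lemma nvdC (hee : ∀ i j : Fin 4, ⟪e i, e j⟫ = if i = j then (1:ℝ) else 0) : formInner b (FdC e) (FdC e) = 6 := by
  simp only [FdC, formInner_add_left, formInner_add_right, formInner_smul_left, formInner_smul_right, formInner_bf, hee]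
  simp only [Fin.reduceEq, if_true, if_false, reduceIte]
  norm_num
  try ring
lemma ovSpSm (hee : ∀ i j : Fin 4, ⟪e i, e j⟫ = if i = j then (1:ℝ) else 0) : formInner b (FSp e lam) (FSm e lam) = 0 := by
  simp only [FSp, FSm, formInner_add_left, formInner_add_right, formInner_smul_left, formInner_smul_right, formInner_bf, hee]
  simp only [Fin.reduceEq, if_true, if_false, reduceIte]
  norm_num
lemma ovSpO12 (hee : ∀ i j : Fin 4, ⟪e i, e j⟫ = if i = j then (1:ℝ) else 0) : formInner b (FSp e lam) (FO12 e) = 0 := by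
  simp only [FSp, FO12, formInner_add_left, formInner_add_right, formInner_smul_left, formInner_smul_right, formInner_bf, hee]
  simp only [Fin.reduceEq, if_true, if_false, reduceIte]
  norm_num
lemma ovSmO12 (hee : ∀ i j : Fin 4, ⟪e i, e j⟫ = if i = j then (1:ℝ) else 0) : formInner b (FSm e lam) (FO12 e) = 0 := by
  simp only [FSm, FO12, formInner_add_left, formInner_add_right, formInner_smul_left, formInner_smul_right, formInner_bf, hee]
  simp only [Fin.reduceEq, if_true, if_false, reduceIte]
  norm_num
lemma ovSpO34 (hee : ∀ i j : Fin 4, ⟪e i, e j⟫ = if i = j then (1:ℝ) else 0) : formInner b (FSp e lam) (FO34 e) = 0 := by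
  simp only [FSp, FO34, formInner_add_left, formInner_add_right, formInner_smul_left, formInner_smul_right, formInner_bf, hee]
  simp only [Fin.reduceEq, if_true, if_false, reduceIte]
  norm_num
lemma ovSmO34 (hee : ∀ i j : Fin 4, ⟪e i, e j⟫ = if i = j then (1:ℝ) else 0) : formInner b (FSm e lam) (FO34 e) = 0 := by
  simp only [FSm, FO34, formInner_add_left, formInner_add_right, formInner_smul_left, formInner_smul_right, formInner_bf, hee]
  simp only [Fin.reduceEq, if_true, if_false, reduceIte]
  norm_num
lemma ovSpdA (hee : ∀ i j : Fin 4, ⟪e i, e j⟫ = if i = j then (1:ℝ) else 0) : formInner b (FSp e lam) (FdA e) = 0 := by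
  simp only [FSp, FdA, formInner_add_left, formInner_add_right, formInner_smul_left, formInner_smul_right, formInner_bf, hee]
  simp only [Fin.reduceEq, if_true, if_false, reduceIte]
  norm_num
lemma ovSmdA (hee : ∀ i j : Fin 4, ⟪e i, e j⟫ = if i = j then (1:ℝ) else 0) : formInner b (FSm e lam) (FdA e) = 0 := by
  simp only [FSm, FdA, formInner_add_left, formInner_add_right, formInner_smul_left, formInner_smul_right, formInner_bf, hee]
  simp only [Fin.reduceEq, if_true, if_false, reduceIte]
  norm_num
lemma ovSpdD (hee : ∀ i j : Fin 4, ⟪e i, e j⟫ = if i = j then (1:ℝ) else 0) : formInner b (FSp e lam) (FdD e) = 0 := by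
  simp only [FSp, FdD, formInner_add_left, formInner_add_right, formInner_smul_left, formInner_smul_right, formInner_bf, hee]
  simp only [Fin.reduceEq, if_true, if_false, reduceIte]
  norm_num
lemma ovSmdD (hee : ∀ i j : Fin 4, ⟪e i, e j⟫ = if i = j then (1:ℝ) else 0) : formInner b (FSm e lam) (FdD e) = 0 := by
  simp only [FSm, FdD, formInner_add_left, formInner_add_right, formInner_smul_left, formInner_smul_right, formInner_bf, hee]
  simp only [Fin.reduceEq, if_true, if_false, reduceIte]
  norm_num
lemma ovSpdC (hee : ∀ i j : Fin 4, ⟪e i, e j⟫ = if i = j then (1:ℝ) else 0) : formInner b (FSp e lam) (FdC e) = 0 := by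
  simp only [FSp, FdC, formInner_add_left, formInner_add_right, formInner_smul_left, formInner_smul_right, formInner_bf, hee]
  simp only [Fin.reduceEq, if_true, if_false, reduceIte]
  norm_num
lemma ovSmdC (hee : ∀ i j : Fin 4, ⟪e i, e j⟫ = if i = j then (1:ℝ) else 0) : formInner b (FSm e lam) (FdC e) = 0 := by
  simp only [FSm, FdC, formInner_add_left, formInner_add_right, formInner_smul_left, formInner_smul_right, formInner_bf, hee]
  simp only [Fin.reduceEq, if_true, if_false, reduceIte]
  norm_num

variable (R : V →ₗ[ℝ] V →ₗ[ℝ] V →ₗ[ℝ] V →ₗ[ℝ] ℝ) (hR : IsAlgCurvatureTensor R)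
lemma h2R' (hR : IsAlgCurvatureTensor R) (x y z w : V) : R x y z w = - R x y w z := by
  linear_combination hR.2.1 x y z w + hR.1 z w x y - hR.2.1 w z x y
lemma hxx' (hR : IsAlgCurvatureTensor R) (x z w : V) : R x x z w = 0 := by
  linear_combination (1/2 : ℝ) * hR.1 x x z w
lemma hzz' (hR : IsAlgCurvatureTensor R) (x y z : V) : R x y z z = 0 := by
  linear_combination (1/2 : ℝ) * h2R' R hR x y z z
lemma cf_0110 (hR : IsAlgCurvatureTensor R) : R (e 0) (e 1) (e 1) (e 0) = -R (e 0) (e 1) (e 0) (e 1) := by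
  linear_combination (1) * (h2R' R hR (e 0) (e 1) (e 1) (e 0))
lemma cf_0132 (hR : IsAlgCurvatureTensor R) : R (e 0) (e 1) (e 3) (e 2) = -R (e 0) (e 1) (e 2) (e 3) := by
  linear_combination (1) * (h2R' R hR (e 0) (e 1) (e 3) (e 2))
lemma cf_0220 (hR : IsAlgCurvatureTensor R) : R (e 0) (e 2) (e 2) (e 0) = -R (e 0) (e 2) (e 0) (e 2) := by
  linear_combination (1) * (h2R' R hR (e 0) (e 2) (e 2) (e 0))
lemma cf_0330 (hR : IsAlgCurvatureTensor R) : R (e 0) (e 3) (e 3) (e 0) = -R (e 0) (e 3) (e 0) (e 3) := by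
  linear_combination (1) * (h2R' R hR (e 0) (e 3) (e 3) (e 0))
lemma cf_1001 (hR : IsAlgCurvatureTensor R) : R (e 1) (e 0) (e 0) (e 1) = -R (e 0) (e 1) (e 0) (e 1) := by
  linear_combination (1) * (hR.1 (e 1) (e 0) (e 0) (e 1))
lemma cf_1010 (hR : IsAlgCurvatureTensor R) : R (e 1) (e 0) (e 1) (e 0) = R (e 0) (e 1) (e 0) (e 1) := by
  linear_combination (1) * (hR.1 (e 1) (e 0) (e 1) (e 0)) + (-1) * (h2R' R hR (e 0) (e 1) (e 1) (e 0))
lemma cf_1023 (hR : IsAlgCurvatureTensor R) : R (e 1) (e 0) (e 2) (e 3) = -R (e 0) (e 1) (e 2) (e 3) := by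
  linear_combination (1) * (hR.1 (e 1) (e 0) (e 2) (e 3))
lemma cf_1032 (hR : IsAlgCurvatureTensor R) : R (e 1) (e 0) (e 3) (e 2) = R (e 0) (e 1) (e 2) (e 3) := by
  linear_combination (1) * (hR.1 (e 1) (e 0) (e 3) (e 2)) + (-1) * (h2R' R hR (e 0) (e 1) (e 3) (e 2))
lemma cf_1203 (hR : IsAlgCurvatureTensor R) : R (e 1) (e 2) (e 0) (e 3) = R (e 0) (e 3) (e 1) (e 2) := by
  linear_combination (1) * (hR.2.1 (e 1) (e 2) (e 0) (e 3))
lemma cf_1221 (hR : IsAlgCurvatureTensor R) : R (e 1) (e 2) (e 2) (e 1) = -R (e 1) (e 2) (e 1) (e 2) := by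
  linear_combination (1) * (h2R' R hR (e 1) (e 2) (e 2) (e 1))
lemma cf_1302 (hR : IsAlgCurvatureTensor R) : R (e 1) (e 3) (e 0) (e 2) = R (e 0) (e 2) (e 1) (e 3) := by
  linear_combination (1) * (hR.2.1 (e 1) (e 3) (e 0) (e 2))
lemma cf_1331 (hR : IsAlgCurvatureTensor R) : R (e 1) (e 3) (e 3) (e 1) = -R (e 1) (e 3) (e 1) (e 3) := by
  linear_combination (1) * (h2R' R hR (e 1) (e 3) (e 3) (e 1))
lemma cf_2002 (hR : IsAlgCurvatureTensor R) : R (e 2) (e 0) (e 0) (e 2) = -R (e 0) (e 2) (e 0) (e 2) := by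
  linear_combination (1) * (hR.1 (e 2) (e 0) (e 0) (e 2))
lemma cf_2020 (hR : IsAlgCurvatureTensor R) : R (e 2) (e 0) (e 2) (e 0) = R (e 0) (e 2) (e 0) (e 2) := by
  linear_combination (1) * (hR.1 (e 2) (e 0) (e 2) (e 0)) + (-1) * (h2R' R hR (e 0) (e 2) (e 2) (e 0))
lemma cf_2031 (hR : IsAlgCurvatureTensor R) : R (e 2) (e 0) (e 3) (e 1) = R (e 0) (e 2) (e 1) (e 3) := by
  linear_combination (1) * (hR.1 (e 2) (e 0) (e 3) (e 1)) + (-1) * (h2R' R hR (e 0) (e 2) (e 3) (e 1))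
lemma cf_2112 (hR : IsAlgCurvatureTensor R) : R (e 2) (e 1) (e 1) (e 2) = -R (e 1) (e 2) (e 1) (e 2) := by
  linear_combination (1) * (hR.1 (e 2) (e 1) (e 1) (e 2))
lemma cf_2121 (hR : IsAlgCurvatureTensor R) : R (e 2) (e 1) (e 2) (e 1) = R (e 1) (e 2) (e 1) (e 2) := by
  linear_combination (1) * (hR.1 (e 2) (e 1) (e 2) (e 1)) + (-1) * (h2R' R hR (e 1) (e 2) (e 2) (e 1))
lemma cf_2130 (hR : IsAlgCurvatureTensor R) : R (e 2) (e 1) (e 3) (e 0) = R (e 0) (e 3) (e 1) (e 2) := by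
  linear_combination (1) * (hR.1 (e 2) (e 1) (e 3) (e 0)) + (-1) * (h2R' R hR (e 1) (e 2) (e 3) (e 0)) + (1) * (hR.2.1 (e 1) (e 2) (e 0) (e 3))
lemma cf_2301 (hR : IsAlgCurvatureTensor R) : R (e 2) (e 3) (e 0) (e 1) = R (e 0) (e 1) (e 2) (e 3) := by
  linear_combination (1) * (hR.2.1 (e 2) (e 3) (e 0) (e 1))
lemma cf_2310 (hR : IsAlgCurvatureTensor R) : R (e 2) (e 3) (e 1) (e 0) = -R (e 0) (e 1) (e 2) (e 3) := by
  linear_combination (1) * (h2R' R hR (e 2) (e 3) (e 1) (e 0)) + (-1) * (hR.2.1 (e 2) (e 3) (e 0) (e 1))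
lemma cf_2332 (hR : IsAlgCurvatureTensor R) : R (e 2) (e 3) (e 3) (e 2) = -R (e 2) (e 3) (e 2) (e 3) := by
  linear_combination (1) * (h2R' R hR (e 2) (e 3) (e 3) (e 2))
lemma cf_3003 (hR : IsAlgCurvatureTensor R) : R (e 3) (e 0) (e 0) (e 3) = -R (e 0) (e 3) (e 0) (e 3) := by
  linear_combination (1) * (hR.1 (e 3) (e 0) (e 0) (e 3))
lemma cf_3021 (hR : IsAlgCurvatureTensor R) : R (e 3) (e 0) (e 2) (e 1) = R (e 0) (e 3) (e 1) (e 2) := by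
  linear_combination (1) * (hR.1 (e 3) (e 0) (e 2) (e 1)) + (-1) * (h2R' R hR (e 0) (e 3) (e 2) (e 1))
lemma cf_3030 (hR : IsAlgCurvatureTensor R) : R (e 3) (e 0) (e 3) (e 0) = R (e 0) (e 3) (e 0) (e 3) := by
  linear_combination (1) * (hR.1 (e 3) (e 0) (e 3) (e 0)) + (-1) * (h2R' R hR (e 0) (e 3) (e 3) (e 0))
lemma cf_3113 (hR : IsAlgCurvatureTensor R) : R (e 3) (e 1) (e 1) (e 3) = -R (e 1) (e 3) (e 1) (e 3) := by
  linear_combination (1) * (hR.1 (e 3) (e 1) (e 1) (e 3))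
lemma cf_3120 (hR : IsAlgCurvatureTensor R) : R (e 3) (e 1) (e 2) (e 0) = R (e 0) (e 2) (e 1) (e 3) := by
  linear_combination (1) * (hR.1 (e 3) (e 1) (e 2) (e 0)) + (-1) * (h2R' R hR (e 1) (e 3) (e 2) (e 0)) + (1) * (hR.2.1 (e 1) (e 3) (e 0) (e 2))
lemma cf_3131 (hR : IsAlgCurvatureTensor R) : R (e 3) (e 1) (e 3) (e 1) = R (e 1) (e 3) (e 1) (e 3) := by
  linear_combination (1) * (hR.1 (e 3) (e 1) (e 3) (e 1)) + (-1) * (h2R' R hR (e 1) (e 3) (e 3) (e 1))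
lemma cf_3201 (hR : IsAlgCurvatureTensor R) : R (e 3) (e 2) (e 0) (e 1) = -R (e 0) (e 1) (e 2) (e 3) := by
  linear_combination (1) * (hR.1 (e 3) (e 2) (e 0) (e 1)) + (-1) * (hR.2.1 (e 2) (e 3) (e 0) (e 1))
lemma cf_3210 (hR : IsAlgCurvatureTensor R) : R (e 3) (e 2) (e 1) (e 0) = R (e 0) (e 1) (e 2) (e 3) := by
  linear_combination (1) * (hR.1 (e 3) (e 2) (e 1) (e 0)) + (-1) * (h2R' R hR (e 2) (e 3) (e 1) (e 0)) + (1) * (hR.2.1 (e 2) (e 3) (e 0) (e 1))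
lemma cf_3223 (hR : IsAlgCurvatureTensor R) : R (e 3) (e 2) (e 2) (e 3) = -R (e 2) (e 3) (e 2) (e 3) := by
  linear_combination (1) * (hR.1 (e 3) (e 2) (e 2) (e 3))
lemma cf_3232 (hR : IsAlgCurvatureTensor R) : R (e 3) (e 2) (e 3) (e 2) = R (e 2) (e 3) (e 2) (e 3) := by
  linear_combination (1) * (hR.1 (e 3) (e 2) (e 3) (e 2)) + (-1) * (h2R' R hR (e 2) (e 3) (e 3) (e 2))
lemma hQSp (hR : IsAlgCurvatureTensor R) : secondKind b R (FSp e lam) (FSp e lam) = ((-4)*lam) * (R (e 0) (e 1) (e 2) (e 3)) + ((2)) * (R (e 0) (e 2) (e 0) (e 2)) + ((4)*lam) * (R (e 0) (e 3) (e 1) (e 2)) + ((2)*lam^2) * (R (e 1) (e 3) (e 1) (e 3)) := by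
  simp only [FSp, secondKind_add_left, secondKind_add_right, secondKind_smul_left, secondKind_smul_right, secondKind_bf]
  simp only [hxx' R hR, hzz' R hR]
  simp only [cf_0110 e R hR, cf_0132 e R hR, cf_0220 e R hR, cf_0330 e R hR, cf_1001 e R hR, cf_1010 e R hR, cf_1023 e R hR, cf_1032 e R hR, cf_1203 e R hR, cf_1221 e R hR, cf_1302 e R hR, cf_1331 e R hR, cf_2002 e R hR, cf_2020 e R hR, cf_2031 e R hR, cf_2112 e R hR, cf_2121 e R hR, cf_2130 e R hR, cf_2301 e R hR, cf_2310 e R hR, cf_2332 e R hR, cf_3003 e R hR, cf_3021 e R hR, cf_3030 e R hR, cf_3113 e R hR, cf_3120 e R hR, cf_3131 e R hR, cf_3201 e R hR, cf_3210 e R hR, cf_3223 e R hR, cf_3232 e R hR]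
  ring
lemma hQSm (hR : IsAlgCurvatureTensor R) : secondKind b R (FSm e lam) (FSm e lam) = ((-4)*lam) * (R (e 0) (e 1) (e 2) (e 3)) + ((-4)*lam) * (R (e 0) (e 2) (e 1) (e 3)) + ((2)*lam^2) * (R (e 0) (e 3) (e 0) (e 3)) + ((2)) * (R (e 1) (e 2) (e 1) (e 2)) := by
  simp only [FSm, secondKind_add_left, secondKind_add_right, secondKind_smul_left, secondKind_smul_right, secondKind_bf]
  simp only [hxx' R hR, hzz' R hR]
  simp only [cf_0110 e R hR, cf_0132 e R hR, cf_0220 e R hR, cf_0330 e R hR, cf_1001 e R hR, cf_1010 e R hR, cf_1023 e R hR, cf_1032 e R hR, cf_1203 e R hR, cf_1221 e R hR, cf_1302 e R hR, cf_1331 e R hR, cf_2002 e R hR, cf_2020 e R hR, cf_2031 e R hR, cf_2112 e R hR, cf_2121 e R hR, cf_2130 e R hR, cf_2301 e R hR, cf_2310 e R hR, cf_2332 e R hR, cf_3003 e R hR, cf_3021 e R hR, cf_3030 e R hR, cf_3113 e R hR, cf_3120 e R hR, cf_3131 e R hR, cf_3201 e R hR, cf_3210 e R hR, cf_3223 e R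 hR, cf_3232 e R hR]
  ring
lemma hQO12 (hR : IsAlgCurvatureTensor R) : secondKind b R (FO12 e) (FO12 e) = ((2)) * (R (e 0) (e 1) (e 0) (e 1)) := by
  simp only [FO12, secondKind_add_left, secondKind_add_right, secondKind_smul_left, secondKind_smul_right, secondKind_bf]
  simp only [hxx' R hR, hzz' R hR]
  simp only [cf_0110 e R hR, cf_0132 e R hR, cf_0220 e R hR, cf_0330 e R hR, cf_1001 e R hR, cf_1010 e R hR, cf_1023 e R hR, cf_1032 e R hR, cf_1203 e R hR, cf_1221 e R hR, cf_1302 e R hR, cf_1331 e R hR, cf_2002 e R hR, cf_2020 e R hR, cf_2031 e R hR, cf_2112 e R hR, cf_2121 e R hR, cf_2130 e R hR, cf_2301 e R hR, cf_2310 e R hR, cf_2332 e R hR, cf_3003 e R hR, cf_3021 e R hR, cf_3030 e R hR, cf_3113 e R hR, cf_3120 e R hR, cf_3131 e R hR, cf_3201 e R hR, cf_3210 e R hR, cf_3223 e R hR, cf_3232 e R hR]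
  ring
lemma hQO34 (hR : IsAlgCurvatureTensor R) : secondKind b R (FO34 e) (FO34 e) = ((2)) * (R (e 2) (e 3) (e 2) (e 3)) := by
  simp only [FO34, secondKind_add_left, secondKind_add_right, secondKind_smul_left, secondKind_smul_right, secondKind_bf]
  simp only [hxx' R hR, hzz' R hR]
  simp only [cf_0110 e R hR, cf_0132 e R hR, cf_0220 e R hR, cf_0330 e R hR, cf_1001 e R hR, cf_1010 e R hR, cf_1023 e R hR, cf_1032 e R hR, cf_1203 e R hR, cf_1221 e R hR, cf_1302 e R hR, cf_1331 e R hR, cf_2002 e R hR, cf_2020 e R hR, cf_2031 e R hR, cf_2112 e R hR, cf_2121 e R hR, cf_2130 e R hR, cf_2301 e R hR, cf_2310 e R hR, cf_2332 e R hR, cf_3003 e R hR, cf_3021 e R hR, cf_3030 e R hR, cf_3113 e R hR, cf_3120 e R hR, cf_3131 e R hR, cf_3201 e R hR, cf_3210 e R hR, cf_3223 e R hR, cf_3232 e R hR]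
  ring
lemma hQdA (hR : IsAlgCurvatureTensor R) : secondKind b R (FdA e) (FdA e) = ((-2)) * (R (e 0) (e 1) (e 0) (e 1)) + ((2)) * (R (e 0) (e 2) (e 0) (e 2)) + ((2)) * (R (e 0) (e 3) (e 0) (e 3)) + ((2)) * (R (e 1) (e 2) (e 1) (e 2)) + ((2)) * (R (e 1) (e 3) (e 1) (e 3)) + ((-2)) * (R (e 2) (e 3) (e 2) (e 3)) := by
  simp only [FdA, secondKind_add_left, secondKind_add_right, secondKind_smul_left, secondKind_smul_right, secondKind_bf]
  simp only [hxx' R hR, hzz' R hR]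
  simp only [cf_0110 e R hR, cf_0132 e R hR, cf_0220 e R hR, cf_0330 e R hR, cf_1001 e R hR, cf_1010 e R hR, cf_1023 e R hR, cf_1032 e R hR, cf_1203 e R hR, cf_1221 e R hR, cf_1302 e R hR, cf_1331 e R hR, cf_2002 e R hR, cf_2020 e R hR, cf_2031 e R hR, cf_2112 e R hR, cf_2121 e R hR, cf_2130 e R hR, cf_2301 e R hR, cf_2310 e R hR, cf_2332 e R hR, cf_3003 e R hR, cf_3021 e R hR, cf_3030 e R hR, cf_3113 e R hR, cf_3120 e R hR, cf_3131 e R hR, cf_3201 e R hR, cf_3210 e R hR, cf_3223 e R hR, cf_3232 e R hR]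
  ring
lemma hQdD (hR : IsAlgCurvatureTensor R) : secondKind b R (FdD e) (FdD e) = ((-2)) * (R (e 0) (e 1) (e 0) (e 1)) + ((4)) * (R (e 0) (e 2) (e 0) (e 2)) + ((4)) * (R (e 1) (e 2) (e 1) (e 2)) := by
  simp only [FdD, secondKind_add_left, secondKind_add_right, secondKind_smul_left, secondKind_smul_right, secondKind_bf]
  simp only [hxx' R hR, hzz' R hR]
  simp only [cf_0110 e R hR, cf_0132 e R hR, cf_0220 e R hR, cf_0330 e R hR, cf_1001 e R hR, cf_1010 e R hR, cf_1023 e R hR, cf_1032 e R hR, cf_1203 e R hR, cf_1221 e R hR, cf_1302 e R hR, cf_1331 e R hR, cf_2002 e R hR, cf_2020 e R hR, cf_2031 e R hR, cf_2112 e R hR, cf_2121 e R hR, cf_2130 e R hR, cf_2301 e R hR, cf_2310 e R hR, cf_2332 e R hR, cf_3003 e R hR, cf_3021 e R hR, cf_3030 e R hR, cf_3113 e R hR, cf_3120 e R hR, cf_3131 e R hR, cf_3201 e R hR, cf_3210 e R hR, cf_3223 e R hR, cf_3232 e R hR]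
  ring
lemma hQdC (hR : IsAlgCurvatureTensor R) : secondKind b R (FdC e) (FdC e) = ((-2)) * (R (e 0) (e 1) (e 0) (e 1)) + ((4)) * (R (e 0) (e 3) (e 0) (e 3)) + ((4)) * (R (e 1) (e 3) (e 1) (e 3)) := by
  simp only [FdC, secondKind_add_left, secondKind_add_right, secondKind_smul_left, secondKind_smul_right, secondKind_bf]
  simp only [hxx' R hR, hzz' R hR]
  simp only [cf_0110 e R hR, cf_0132 e R hR, cf_0220 e R hR, cf_0330 e R hR, cf_1001 e R hR, cf_1010 e R hR, cf_1023 e R hR, cf_1032 e R hR, cf_1203 e R hR, cf_1221 e R hR, cf_1302 e R hR, cf_1331 e R hR, cf_2002 e R hR, cf_2020 e R hR, cf_2031 e R hR, cf_2112 e R hR, cf_2121 e R hR, cf_2130 e R hR, cf_2301 e R hR, cf_2310 e R hR, cf_2332 e R hR, cf_3003 e R hR, cf_3021 e R hR, cf_3030 e R hR, cf_3113 e R hR, cf_3120 e R hR, cf_3131 e R hR, cf_3201 e R hR, cf_3210 e R hR, cf_3223 e R hR, cf_3232 e R hR]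
  ring
end Forms


set_option maxHeartbeats 1000000 in
theorem stmt_10 {n : ℕ} (hn : 4 ≤ n)
    (b : OrthonormalBasis (Fin n) ℝ V)
    (R : V →ₗ[ℝ] V →ₗ[ℝ] V →ₗ[ℝ] V →ₗ[ℝ] ℝ)
    (hR : IsAlgCurvatureTensor R)
    (h3 : kNonnegSecondKind b R 3) :
    ∀ e : Fin 4 → V, Orthonormal ℝ e → ∀ lam : ℝ,
      0 ≤ R (e 0) (e 2) (e 0) (e 2) + lam ^ 2 * R (e 0) (e 3) (e 0) (e 3)
          + R (e 1) (e 2) (e 1) (e 2) + lam ^ 2 * R (e 1) (e 3) (e 1) (e 3)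
          - 4 * lam * R (e 0) (e 1) (e 2) (e 3) := by
  intro e he lam
  have hee : ∀ i j : Fin 4, ⟪e i, e j⟫ = if i = j then (1:ℝ) else 0 :=
    orthonormal_iff_ite.mp he
  have hB : R (e 0) (e 1) (e 2) (e 3) + R (e 0) (e 3) (e 1) (e 2)
      - R (e 0) (e 2) (e 1) (e 3) = 0 := by
    linear_combination hR.2.2 (e 0) (e 1) (e 2) (e 3) - hR.2.1 (e 1) (e 2) (e 0) (e 3)
      - hR.1 (e 2) (e 0) (e 1) (e 3)
  have J1 := triple_ineq b R h3 (FSp e lam) (FSm e lam) (FO12 e)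
    (tsSp b e lam hee) (tsSm b e lam hee) (tsO12 b e hee)
    (2 + 2*lam^2) (2 + 2*lam^2) 2 (nvSp b e lam hee) (nvSm b e lam hee) (nvO12 b e hee)
    (by positivity) (by positivity) (by norm_num)
    (ovSpSm b e lam hee) (ovSpO12 b e lam hee) (ovSmO12 b e lam hee)
  rw [hQSp b e lam R hR, hQSm b e lam R hR, hQO12 b e R hR] at J1
  have J2 := triple_ineq b R h3 (FSp e lam) (FSm e lam) (FO34 e)
    (tsSp b e lam hee) (tsSm b e lam hee) (tsO34 b e hee)
    (2 + 2*lam^2) (2 + 2*lam^2) 2 (nvSp b e lam hee) (nvSm b e lam hee) (nvO34 b e hee)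
    (by positivity) (by positivity) (by norm_num)
    (ovSpSm b e lam hee) (ovSpO34 b e lam hee) (ovSmO34 b e lam hee)
  rw [hQSp b e lam R hR, hQSm b e lam R hR, hQO34 b e R hR] at J2
  have J3 := triple_ineq b R h3 (FSp e lam) (FSm e lam) (FdA e)
    (tsSp b e lam hee) (tsSm b e lam hee) (tsdA b e hee)
    (2 + 2*lam^2) (2 + 2*lam^2) 4 (nvSp b e lam hee) (nvSm b e lam hee) (nvdA b e hee)
    (by positivity) (by positivity) (by norm_num)
    (ovSpSm b e lam hee) (ovSpdA b e lam hee) (ovSmdA b e lam hee)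
  rw [hQSp b e lam R hR, hQSm b e lam R hR, hQdA b e R hR] at J3
  have J4 := triple_ineq b R h3 (FSp e lam) (FSm e lam) (FdD e)
    (tsSp b e lam hee) (tsSm b e lam hee) (tsdD b e hee)
    (2 + 2*lam^2) (2 + 2*lam^2) 6 (nvSp b e lam hee) (nvSm b e lam hee) (nvdD b e hee)
    (by positivity) (by positivity) (by norm_num)
    (ovSpSm b e lam hee) (ovSpdD b e lam hee) (ovSmdD b e lam hee)
  rw [hQSp b e lam R hR, hQSm b e lam R hR, hQdD b e R hR] at J4
  have J5 := triple_ineq b R h3 (FSp e lam) (FSm e lam) (FdC e)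
    (tsSp b e lam hee) (tsSm b e lam hee) (tsdC b e hee)
    (2 + 2*lam^2) (2 + 2*lam^2) 6 (nvSp b e lam hee) (nvSm b e lam hee) (nvdC b e hee)
    (by positivity) (by positivity) (by norm_num)
    (ovSpSm b e lam hee) (ovSpdC b e lam hee) (ovSmdC b e lam hee)
  rw [hQSp b e lam R hR, hQSm b e lam R hR, hQdC b e R hR] at J5
  have hBl1 : lam^1 * (R (e 0) (e 1) (e 2) (e 3) + R (e 0) (e 3) (e 1) (e 2) - R (e 0) (e 2) (e 1) (e 3)) = 0 := by linear_combination lam^1 * hB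
  have hBl3 : lam^3 * (R (e 0) (e 1) (e 2) (e 3) + R (e 0) (e 3) (e 1) (e 2) - R (e 0) (e 2) (e 1) (e 3)) = 0 := by linear_combination lam^3 * hB
  have hBl5 : lam^5 * (R (e 0) (e 1) (e 2) (e 3) + R (e 0) (e 3) (e 1) (e 2) - R (e 0) (e 2) (e 1) (e 3)) = 0 := by linear_combination lam^5 * hB
  have hpos : (0:ℝ) < 12*(2 + 2*lam^2)^2 := by positivity
  rcases le_or_gt (lam^2) 1 with hc | hc
  · have F1 := mul_nonneg (show (0:ℝ) ≤ 1 + lam^2 by positivity) J1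
    have F2 := mul_nonneg (show (0:ℝ) ≤ 2*lam^2 by positivity) J2
    have F3 := mul_nonneg (show (0:ℝ) ≤ 2*lam^2 by positivity) J3
    have F4 := mul_nonneg (show (0:ℝ) ≤ 1 - lam^2 by linarith) J4
    have big : (0:ℝ) ≤ 12*(2 + 2*lam^2)^2 * (R (e 0) (e 2) (e 0) (e 2) + lam ^ 2 * R (e 0) (e 3) (e 0) (e 3) + R (e 1) (e 2) (e 1) (e 2) + lam ^ 2 * R (e 1) (e 3) (e 1) (e 3) - 4 * lam * R (e 0) (e 1) (e 2) (e 3)) := by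
      linarith [F1, F2, F3, F4, hBl1, hBl3, hBl5]
    nlinarith [big, hpos]
  · have F1 := mul_nonneg (show (0:ℝ) ≤ 1 + lam^2 by positivity) J1
    have F2 := mul_nonneg (show (0:ℝ) ≤ (2:ℝ) by norm_num) J2
    have F3 := mul_nonneg (show (0:ℝ) ≤ (2:ℝ) by norm_num) J3
    have F4 := mul_nonneg (show (0:ℝ) ≤ lam^2 - 1 by linarith) J5
    have big : (0:ℝ) ≤ 12*(2 + 2*lam^2)^2 * (R (e 0) (e 2) (e 0) (e 2) + lam ^ 2 * R (e 0) (e 3) (e 0) (e 3) + R (e 1) (e 2) (e 1) (e 2) + lam ^ 2 * R (e 1) (e 3) (e 1) (e 3) - 4 * lam * R (e 0) (e 1) (e 2) (e 3)) := by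
      linarith [F1, F2, F3, F4, hBl1, hBl3, hBl5]
    nlinarith [big, hpos]
end

section
/- Let (V,⟨·,·⟩) be a real inner product space of dimension n ≥ 4 and let R be an algebraic curvature tensor on V having nonnegative curvature operator of the second kind (that is, R̊(φ,φ) ≥ 0 for every traceless symmetric bilinear form φ on V). Then for every orthonormal four-frame {e_1,e_2,e_3,e_4} in V and all real numbers λ, μ, one has R_{1313} + λ²R_{1414} + μ²R_{2323} + λ²μ²R_{2424} - 6λμR_{1234} ≥ 0. -/
open scoped RealInnerProductSpace

variable {V : Type*} [NormedAddCommGroup V] [InnerProductSpace ℝ V]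

noncomputable def myouter (u v : V) : V →ₗ[ℝ] V →ₗ[ℝ] ℝ :=
  LinearMap.mk₂ ℝ (fun x y => ⟪u, x⟫ * ⟪v, y⟫)
    (fun x x' y => by rw [inner_add_right]; ring)
    (fun c x y => by rw [real_inner_smul_right, smul_eq_mul]; ring)
    (fun x y y' => by rw [inner_add_right]; ring)
    (fun c x y => by rw [real_inner_smul_right, smul_eq_mul]; ring)

@[simp] lemma myouter_apply (u v x y : V) : myouter u v x y = ⟪u, x⟫ * ⟪v, y⟫ := rfl

lemma sum_inner_mul {n : ℕ} (b : OrthonormalBasis (Fin n) ℝ V) (f : V →ₗ[ℝ] ℝ) (u : V) :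
    ∑ i, ⟪u, b i⟫ * f (b i) = f u := by
  conv_rhs => rw [← b.sum_repr u]
  rw [map_sum]
  refine Finset.sum_congr rfl fun i _ => ?_
  rw [map_smul, b.repr_apply_apply, smul_eq_mul, real_inner_comm]

lemma quad_sum {n : ℕ} (b : OrthonormalBasis (Fin n) ℝ V)
    (T : V →ₗ[ℝ] V →ₗ[ℝ] V →ₗ[ℝ] V →ₗ[ℝ] ℝ) (u w z v : V) :
    (∑ i, ∑ j, ∑ k, ∑ l,
      ⟪u, b i⟫ * ⟪w, b j⟫ * ⟪z, b k⟫ * ⟪v, b l⟫ * T (b i) (b j) (b k) (b l))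
      = T u w z v := by
  calc (∑ i, ∑ j, ∑ k, ∑ l,
      ⟪u, b i⟫ * ⟪w, b j⟫ * ⟪z, b k⟫ * ⟪v, b l⟫ * T (b i) (b j) (b k) (b l))
      = ∑ i, ∑ j, ∑ k, ⟪u, b i⟫ * ⟪w, b j⟫ * ⟪z, b k⟫ * T (b i) (b j) (b k) v := by
        refine Finset.sum_congr rfl fun i _ => Finset.sum_congr rfl fun j _ =>
          Finset.sum_congr rfl fun k _ => ?_
        rw [← sum_inner_mul b (T (b i) (b j) (b k)) v, Finset.mul_sum]
        exact Finset.sum_congr rfl fun l _ => by ring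
    _ = ∑ i, ∑ j, ⟪u, b i⟫ * ⟪w, b j⟫ * T (b i) (b j) z v := by
        refine Finset.sum_congr rfl fun i _ => Finset.sum_congr rfl fun j _ => ?_
        have h := sum_inner_mul b (((T (b i) (b j)).flip v)) z
        simp only [LinearMap.flip_apply] at h
        rw [← h, Finset.mul_sum]
        exact Finset.sum_congr rfl fun k _ => by ring
    _ = ∑ i, ⟪u, b i⟫ * T (b i) w z v := by
        refine Finset.sum_congr rfl fun i _ => ?_
        have h := sum_inner_mul b ((((T (b i)).flip z).flip v)) w
        simp only [LinearMap.flip_apply] at h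
        rw [← h, Finset.mul_sum]
        exact Finset.sum_congr rfl fun j _ => by ring
    _ = T u w z v := by
        have h := sum_inner_mul b (((T.flip w).flip z).flip v) u
        simp only [LinearMap.flip_apply] at h
        exact h

lemma secondKind_myouter {n : ℕ} (b : OrthonormalBasis (Fin n) ℝ V)
    (R : V →ₗ[ℝ] V →ₗ[ℝ] V →ₗ[ℝ] V →ₗ[ℝ] ℝ) (u v w z : V) :
    secondKind b R (myouter u v) (myouter w z) = R u w z v := by
  rw [← quad_sum b R u w z v]
  unfold secondKind
  refine Finset.sum_congr rfl fun i _ => Finset.sum_congr rfl fun j _ =>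
    Finset.sum_congr rfl fun k _ => Finset.sum_congr rfl fun l _ => ?_
  simp only [myouter_apply]
  ring

lemma sk_add_left {n : ℕ} (b : OrthonormalBasis (Fin n) ℝ V)
    (R : V →ₗ[ℝ] V →ₗ[ℝ] V →ₗ[ℝ] V →ₗ[ℝ] ℝ) (φ φ' ψ : V →ₗ[ℝ] V →ₗ[ℝ] ℝ) :
    secondKind b R (φ + φ') ψ = secondKind b R φ ψ + secondKind b R φ' ψ := by
  unfold secondKind
  simp only [LinearMap.add_apply, mul_add, add_mul, Finset.sum_add_distrib]

lemma sk_add_right {n : ℕ} (b : OrthonormalBasis (Fin n) ℝ V)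
    (R : V →ₗ[ℝ] V →ₗ[ℝ] V →ₗ[ℝ] V →ₗ[ℝ] ℝ) (φ ψ ψ' : V →ₗ[ℝ] V →ₗ[ℝ] ℝ) :
    secondKind b R φ (ψ + ψ') = secondKind b R φ ψ + secondKind b R φ ψ' := by
  unfold secondKind
  simp only [LinearMap.add_apply, mul_add, add_mul, Finset.sum_add_distrib]

lemma sk_smul_left {n : ℕ} (b : OrthonormalBasis (Fin n) ℝ V)
    (R : V →ₗ[ℝ] V →ₗ[ℝ] V →ₗ[ℝ] V →ₗ[ℝ] ℝ) (c : ℝ) (φ ψ : V →ₗ[ℝ] V →ₗ[ℝ] ℝ) :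
    secondKind b R (c • φ) ψ = c * secondKind b R φ ψ := by
  unfold secondKind
  rw [Finset.mul_sum]
  refine Finset.sum_congr rfl fun i _ => ?_
  rw [Finset.mul_sum]
  refine Finset.sum_congr rfl fun j _ => ?_
  rw [Finset.mul_sum]
  refine Finset.sum_congr rfl fun k _ => ?_
  rw [Finset.mul_sum]
  refine Finset.sum_congr rfl fun l _ => ?_
  simp only [LinearMap.smul_apply, smul_eq_mul]
  ring

lemma sk_smul_right {n : ℕ} (b : OrthonormalBasis (Fin n) ℝ V)
    (R : V →ₗ[ℝ] V →ₗ[ℝ] V →ₗ[ℝ] V →ₗ[ℝ] ℝ) (c : ℝ) (φ ψ : V →ₗ[ℝ] V →ₗ[ℝ] ℝ) :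
    secondKind b R φ (c • ψ) = c * secondKind b R φ ψ := by
  unfold secondKind
  rw [Finset.mul_sum]
  refine Finset.sum_congr rfl fun i _ => ?_
  rw [Finset.mul_sum]
  refine Finset.sum_congr rfl fun j _ => ?_
  rw [Finset.mul_sum]
  refine Finset.sum_congr rfl fun k _ => ?_
  rw [Finset.mul_sum]
  refine Finset.sum_congr rfl fun l _ => ?_
  simp only [LinearMap.smul_apply, smul_eq_mul]
  ring

lemma ts_add {n : ℕ} (b : OrthonormalBasis (Fin n) ℝ V) {φ ψ : V →ₗ[ℝ] V →ₗ[ℝ] ℝ}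
    (h1 : IsTracelessSymForm b φ) (h2 : IsTracelessSymForm b ψ) :
    IsTracelessSymForm b (φ + ψ) := by
  constructor
  · intro x y
    simp only [LinearMap.add_apply, h1.1 x y, h2.1 x y]
  · simp only [LinearMap.add_apply, Finset.sum_add_distrib, h1.2, h2.2, add_zero]

lemma ts_smul {n : ℕ} (b : OrthonormalBasis (Fin n) ℝ V) (c : ℝ) {φ : V →ₗ[ℝ] V →ₗ[ℝ] ℝ}
    (h : IsTracelessSymForm b φ) : IsTracelessSymForm b (c • φ) := by
  constructor
  · intro x y
    simp only [LinearMap.smul_apply, h.1 x y]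
  · simp only [LinearMap.smul_apply, smul_eq_mul, ← Finset.mul_sum, h.2, mul_zero]

lemma sum_inner_inner {n : ℕ} (b : OrthonormalBasis (Fin n) ℝ V) (u v : V) :
    ∑ i, ⟪u, b i⟫ * ⟪v, b i⟫ = ⟪u, v⟫ := by
  calc ∑ i, ⟪u, b i⟫ * ⟪v, b i⟫ = ∑ i, ⟪u, b i⟫ * ⟪b i, v⟫ :=
        Finset.sum_congr rfl fun i _ => by rw [real_inner_comm v (b i)]
    _ = ⟪u, v⟫ := b.sum_inner_mul_inner u v

lemma ts_pair {n : ℕ} (b : OrthonormalBasis (Fin n) ℝ V) (u v : V) (h : ⟪u, v⟫ = 0) :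
    IsTracelessSymForm b (myouter u v + myouter v u) := by
  constructor
  · intro x y
    simp only [LinearMap.add_apply, myouter_apply]
    ring
  · have h' : ⟪v, u⟫ = 0 := by rw [real_inner_comm]; exact h
    simp only [LinearMap.add_apply, myouter_apply, Finset.sum_add_distrib,
      sum_inner_inner b u v, sum_inner_inner b v u, h, h', add_zero]

set_option maxHeartbeats 2000000 in
theorem stmt_14 {n : ℕ} (hn : 4 ≤ n)
    (b : OrthonormalBasis (Fin n) ℝ V)
    (R : V →ₗ[ℝ] V →ₗ[ℝ] V →ₗ[ℝ] V →ₗ[ℝ] ℝ)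
    (hR : IsAlgCurvatureTensor R)
    (hnn : ∀ φ : V →ₗ[ℝ] V →ₗ[ℝ] ℝ, IsTracelessSymForm b φ →
      0 ≤ secondKind b R φ φ) :
    ∀ e : Fin 4 → V, Orthonormal ℝ e → ∀ lam mu : ℝ,
      0 ≤ R (e 0) (e 2) (e 0) (e 2) + lam ^ 2 * R (e 0) (e 3) (e 0) (e 3)
          + mu ^ 2 * R (e 1) (e 2) (e 1) (e 2)
          + lam ^ 2 * mu ^ 2 * R (e 1) (e 3) (e 1) (e 3)
          - 6 * lam * mu * R (e 0) (e 1) (e 2) (e 3) := by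
  intro e he lam mu
  obtain ⟨h12, hpair, hbia⟩ := hR
  have h34 : ∀ x y z w : V, R x y z w = -R x y w z := fun x y z w => by
    linarith [hpair x y z w, h12 z w x y, hpair w z x y]
  have hz1 : ∀ x z w : V, R x x z w = 0 := fun x z w => by linarith [h12 x x z w]
  have hz2 : ∀ x y z : V, R x y z z = 0 := fun x y z => by linarith [h34 x y z z]
  have ho : ∀ i j : Fin 4, i ≠ j → ⟪e i, e j⟫ = 0 := fun i j hij => he.2 hij
  have ts02 := ts_pair b (e 0) (e 2) (ho 0 2 (by decide))
  have ts03 := ts_pair b (e 0) (e 3) (ho 0 3 (by decide))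
  have ts12 := ts_pair b (e 1) (e 2) (ho 1 2 (by decide))
  have ts13 := ts_pair b (e 1) (e 3) (ho 1 3 (by decide))
  have hc0132 : R (e 0) (e 1) (e 3) (e 2) = -(R (e 0) (e 1) (e 2) (e 3)) := by linarith [h34 (e 0) (e 1) (e 3) (e 2)]
  have hc0213 : R (e 0) (e 2) (e 1) (e 3) = R (e 0) (e 1) (e 2) (e 3) + R (e 0) (e 3) (e 1) (e 2) := by linarith [hbia (e 0) (e 1) (e 2) (e 3), hpair (e 1) (e 2) (e 0) (e 3), h12 (e 2) (e 0) (e 1) (e 3)]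
  have hc0302 : R (e 0) (e 3) (e 0) (e 2) = R (e 0) (e 2) (e 0) (e 3) := by linarith [hpair (e 0) (e 3) (e 0) (e 2)]
  have hc1023 : R (e 1) (e 0) (e 2) (e 3) = -(R (e 0) (e 1) (e 2) (e 3)) := by linarith [h12 (e 1) (e 0) (e 2) (e 3)]
  have hc1032 : R (e 1) (e 0) (e 3) (e 2) = R (e 0) (e 1) (e 2) (e 3) := by linarith [h34 (e 0) (e 1) (e 3) (e 2), h12 (e 1) (e 0) (e 3) (e 2)]
  have hc1202 : R (e 1) (e 2) (e 0) (e 2) = R (e 0) (e 2) (e 1) (e 2) := by linarith [hpair (e 1) (e 2) (e 0) (e 2)]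
  have hc1203 : R (e 1) (e 2) (e 0) (e 3) = R (e 0) (e 3) (e 1) (e 2) := by linarith [hpair (e 1) (e 2) (e 0) (e 3)]
  have hc1302 : R (e 1) (e 3) (e 0) (e 2) = R (e 0) (e 1) (e 2) (e 3) + R (e 0) (e 3) (e 1) (e 2) := by linarith [hpair (e 1) (e 3) (e 0) (e 2), hbia (e 0) (e 1) (e 2) (e 3), hpair (e 1) (e 2) (e 0) (e 3), h12 (e 2) (e 0) (e 1) (e 3)]
  have hc1303 : R (e 1) (e 3) (e 0) (e 3) = R (e 0) (e 3) (e 1) (e 3) := by linarith [hpair (e 1) (e 3) (e 0) (e 3)]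
  have hc1312 : R (e 1) (e 3) (e 1) (e 2) = R (e 1) (e 2) (e 1) (e 3) := by linarith [hpair (e 1) (e 3) (e 1) (e 2)]
  have hc2020 : R (e 2) (e 0) (e 2) (e 0) = R (e 0) (e 2) (e 0) (e 2) := by linarith [h34 (e 0) (e 2) (e 2) (e 0), h12 (e 2) (e 0) (e 2) (e 0)]
  have hc2021 : R (e 2) (e 0) (e 2) (e 1) = R (e 0) (e 2) (e 1) (e 2) := by linarith [h34 (e 0) (e 2) (e 2) (e 1), h12 (e 2) (e 0) (e 2) (e 1)]
  have hc2030 : R (e 2) (e 0) (e 3) (e 0) = R (e 0) (e 2) (e 0) (e 3) := by linarith [h34 (e 0) (e 2) (e 3) (e 0), h12 (e 2) (e 0) (e 3) (e 0)]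
  have hc2031 : R (e 2) (e 0) (e 3) (e 1) = R (e 0) (e 1) (e 2) (e 3) + R (e 0) (e 3) (e 1) (e 2) := by linarith [h34 (e 0) (e 2) (e 3) (e 1), h12 (e 2) (e 0) (e 3) (e 1), hbia (e 0) (e 1) (e 2) (e 3), hpair (e 1) (e 2) (e 0) (e 3), h12 (e 2) (e 0) (e 1) (e 3)]
  have hc2120 : R (e 2) (e 1) (e 2) (e 0) = R (e 0) (e 2) (e 1) (e 2) := by linarith [hpair (e 1) (e 2) (e 0) (e 2), h34 (e 1) (e 2) (e 2) (e 0), h12 (e 2) (e 1) (e 2) (e 0)]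
  have hc2121 : R (e 2) (e 1) (e 2) (e 1) = R (e 1) (e 2) (e 1) (e 2) := by linarith [h34 (e 1) (e 2) (e 2) (e 1), h12 (e 2) (e 1) (e 2) (e 1)]
  have hc2130 : R (e 2) (e 1) (e 3) (e 0) = R (e 0) (e 3) (e 1) (e 2) := by linarith [hpair (e 1) (e 2) (e 0) (e 3), h34 (e 1) (e 2) (e 3) (e 0), h12 (e 2) (e 1) (e 3) (e 0)]
  have hc2131 : R (e 2) (e 1) (e 3) (e 1) = R (e 1) (e 2) (e 1) (e 3) := by linarith [h34 (e 1) (e 2) (e 3) (e 1), h12 (e 2) (e 1) (e 3) (e 1)]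
  have hc2301 : R (e 2) (e 3) (e 0) (e 1) = R (e 0) (e 1) (e 2) (e 3) := by linarith [hpair (e 2) (e 3) (e 0) (e 1)]
  have hc2310 : R (e 2) (e 3) (e 1) (e 0) = -(R (e 0) (e 1) (e 2) (e 3)) := by linarith [hpair (e 2) (e 3) (e 0) (e 1), h34 (e 2) (e 3) (e 1) (e 0)]
  have hc3020 : R (e 3) (e 0) (e 2) (e 0) = R (e 0) (e 2) (e 0) (e 3) := by linarith [hpair (e 0) (e 3) (e 0) (e 2), h34 (e 0) (e 3) (e 2) (e 0), h12 (e 3) (e 0) (e 2) (e 0)]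
  have hc3021 : R (e 3) (e 0) (e 2) (e 1) = R (e 0) (e 3) (e 1) (e 2) := by linarith [h34 (e 0) (e 3) (e 2) (e 1), h12 (e 3) (e 0) (e 2) (e 1)]
  have hc3030 : R (e 3) (e 0) (e 3) (e 0) = R (e 0) (e 3) (e 0) (e 3) := by linarith [h34 (e 0) (e 3) (e 3) (e 0), h12 (e 3) (e 0) (e 3) (e 0)]
  have hc3031 : R (e 3) (e 0) (e 3) (e 1) = R (e 0) (e 3) (e 1) (e 3) := by linarith [h34 (e 0) (e 3) (e 3) (e 1), h12 (e 3) (e 0) (e 3) (e 1)]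
  have hc3120 : R (e 3) (e 1) (e 2) (e 0) = R (e 0) (e 1) (e 2) (e 3) + R (e 0) (e 3) (e 1) (e 2) := by linarith [hpair (e 1) (e 3) (e 0) (e 2), h34 (e 1) (e 3) (e 2) (e 0), h12 (e 3) (e 1) (e 2) (e 0), hbia (e 0) (e 1) (e 2) (e 3), hpair (e 1) (e 2) (e 0) (e 3), h12 (e 2) (e 0) (e 1) (e 3)]
  have hc3121 : R (e 3) (e 1) (e 2) (e 1) = R (e 1) (e 2) (e 1) (e 3) := by linarith [hpair (e 1) (e 3) (e 1) (e 2), h34 (e 1) (e 3) (e 2) (e 1), h12 (e 3) (e 1) (e 2) (e 1)]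
  have hc3130 : R (e 3) (e 1) (e 3) (e 0) = R (e 0) (e 3) (e 1) (e 3) := by linarith [hpair (e 1) (e 3) (e 0) (e 3), h34 (e 1) (e 3) (e 3) (e 0), h12 (e 3) (e 1) (e 3) (e 0)]
  have hc3131 : R (e 3) (e 1) (e 3) (e 1) = R (e 1) (e 3) (e 1) (e 3) := by linarith [h34 (e 1) (e 3) (e 3) (e 1), h12 (e 3) (e 1) (e 3) (e 1)]
  have hc3201 : R (e 3) (e 2) (e 0) (e 1) = -(R (e 0) (e 1) (e 2) (e 3)) := by linarith [hpair (e 2) (e 3) (e 0) (e 1), h12 (e 3) (e 2) (e 0) (e 1)]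
  have hc3210 : R (e 3) (e 2) (e 1) (e 0) = R (e 0) (e 1) (e 2) (e 3) := by linarith [hpair (e 2) (e 3) (e 0) (e 1), h34 (e 2) (e 3) (e 1) (e 0), h12 (e 3) (e 2) (e 1) (e 0)]
  have hp := hnn ((myouter (e 0) (e 2) + myouter (e 2) (e 0))
      + lam • (myouter (e 0) (e 3) + myouter (e 3) (e 0))
      + (-mu) • (myouter (e 1) (e 2) + myouter (e 2) (e 1))
      + (lam * mu) • (myouter (e 1) (e 3) + myouter (e 3) (e 1)))
    (ts_add b (ts_add b (ts_add b ts02 (ts_smul b lam ts03)) (ts_smul b (-mu) ts12))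
      (ts_smul b (lam * mu) ts13))
  have hm := hnn ((myouter (e 0) (e 2) + myouter (e 2) (e 0))
      + (-lam) • (myouter (e 0) (e 3) + myouter (e 3) (e 0))
      + mu • (myouter (e 1) (e 2) + myouter (e 2) (e 1))
      + (lam * mu) • (myouter (e 1) (e 3) + myouter (e 3) (e 1)))
    (ts_add b (ts_add b (ts_add b ts02 (ts_smul b (-lam) ts03)) (ts_smul b mu ts12))
      (ts_smul b (lam * mu) ts13))
  simp only [sk_add_left, sk_add_right, sk_smul_left, sk_smul_right,
    secondKind_myouter] at hp hm
  simp only [hc0132, hc0213, hc0302, hc1023, hc1032, hc1202, hc1203, hc1302, hc1303, hc1312, hc2020, hc2021, hc2030, hc2031, hc2120, hc2121, hc2130, hc2131, hc2301, hc2310, hc3020, hc3021, hc3030, hc3031, hc3120, hc3121, hc3130, hc3131, hc3201, hc3210, hz1, hz2, mul_zero, zero_add, add_zero] at hp hm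
  linarith [hp, hm]
end
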